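/- Let F be a field, n a natural number, and r : Fin n → Fin n → Prop a reflexive, transitive, antisymmetric relation such that r i j implies i ≤ j. Let S be the set of matrices M : Matrix (Fin n) (Fin n) F with M i j = 0 whenever ¬ r i j. If e ∈ S satisfies e*e = e, then there exist matrices M, N ∈ S with M*N = 1 and N*M = 1 such that N*e*M is a diagonal matrix (Matrix.IsDiag). -/
import Mathlib


/-- Any idempotent in the matrix realization of a finite incidence algebra inside the
upper triangular matrices can be diagonalized by a conjugation inside the algebra. -/
theorem idempotent_diagonalizable_in_incidence_matrices
    {F : Type*} [Field F] {n : ℕ} (r : Fin n → Fin n → Prop)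
    (hrefl : ∀ i, r i i)
    (htrans : ∀ i j k, r i j → r j k → r i k)
    (hantisymm : ∀ i j, r i j → r j i → i = j)
    (hle : ∀ i j, r i j → i ≤ j)
    (e : Matrix (Fin n) (Fin n) F)
    (he_mem : ∀ i j, ¬ r i j → e i j = 0)
    (he_idem : e * e = e) :
    ∃ M N : Matrix (Fin n) (Fin n) F,
      (∀ i j, ¬ r i j → M i j = 0) ∧ (∀ i j, ¬ r i j → N i j = 0) ∧
      M * N = 1 ∧ N * M = 1 ∧ (N * e * M).IsDiag := by
  classical
  -- the membership predicate
  set P : Matrix (Fin n) (Fin n) F → Prop := fun A => ∀ i j, ¬ r i j → A i j = 0 with hP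
  have hPmul : ∀ A B, P A → P B → P (A * B) := by
    intro A B hA hB i j hij
    rw [Matrix.mul_apply]
    apply Finset.sum_eq_zero
    intro k _
    by_cases hik : r i k
    · have hkj : ¬ r k j := fun h => hij (htrans i k j hik h)
      rw [hB k j hkj, mul_zero]
    · rw [hA i k hik, zero_mul]
  have hPone : P 1 := by
    intro i j hij
    have hne : i ≠ j := fun h => hij (h ▸ hrefl i)
    exact Matrix.one_apply_ne hne
  have hPsub : ∀ A B, P A → P B → P (A - B) := by
    intro A B hA hB i j hij
    rw [Matrix.sub_apply, hA i j hij, hB i j hij, sub_zero]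
  have hPadd : ∀ A B, P A → P B → P (A + B) := by
    intro A B hA hB i j hij
    rw [Matrix.add_apply, hA i j hij, hB i j hij, add_zero]
  have hPe : P e := he_mem
  -- the diagonal part of e
  set d : Matrix (Fin n) (Fin n) F := Matrix.diagonal (fun i => e i i) with hd
  have hPd : P d := by
    intro i j hij
    have hne : i ≠ j := fun h => hij (h ▸ hrefl i)
    exact Matrix.diagonal_apply_ne _ hne
  -- diagonal entries are idempotent scalars
  have hdiag_idem : ∀ i, e i i * e i i = e i i := by
    intro i
    have h := congrFun (congrFun he_idem i) i
    rw [Matrix.mul_apply] at h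
    rw [Finset.sum_eq_single i] at h
    · exact h
    · intro k _ hk
      by_cases h1 : r i k
      · by_cases h2 : r k i
        · exact absurd (hantisymm i k h1 h2).symm hk
        · rw [he_mem k i h2, mul_zero]
      · rw [he_mem i k h1, zero_mul]
    · intro h'; exact absurd (Finset.mem_univ i) h'
  have hdd : d * d = d := by
    rw [hd, Matrix.diagonal_mul_diagonal]
    exact congrArg Matrix.diagonal (funext hdiag_idem)
  -- the conjugating unit u = d*e + (1-d)*(1-e)
  set u : Matrix (Fin n) (Fin n) F := d * e + (1 - d) * (1 - e) with hu
  have hPu : P u := by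
    apply hPadd
    · exact hPmul _ _ hPd hPe
    · exact hPmul _ _ (hPsub _ _ hPone hPd) (hPsub _ _ hPone hPe)
  -- key identity: u * e = d * u
  have hue : u * e = d * e := by
    have h0 : (1 - e) * e = 0 := by rw [sub_mul, one_mul, he_idem, sub_self]
    rw [hu, add_mul, mul_assoc, mul_assoc, he_idem, h0, mul_zero, add_zero]
  have hdu : d * u = d * e := by
    have h0 : d * (1 - d) = 0 := by rw [mul_sub, mul_one, hdd, sub_self]
    rw [hu, mul_add, ← mul_assoc, ← mul_assoc, hdd, h0, zero_mul, add_zero]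
  have hkey : u * e = d * u := by rw [hue, hdu]
  -- v = u - 1 is strictly upper triangular
  set v : Matrix (Fin n) (Fin n) F := u - 1 with hv
  have hPv : P v := hPsub _ _ hPu hPone
  have h1d : (1 : Matrix (Fin n) (Fin n) F) - d =
      Matrix.diagonal (fun i => 1 - e i i) := by
    rw [hd, ← Matrix.diagonal_one, Matrix.diagonal_sub]
  have hvdiag : ∀ i, v i i = 0 := by
    intro i
    have h1 : (d * e) i i = e i i * e i i := by
      rw [hd, Matrix.diagonal_mul]
    have h2 : ((1 - d) * (1 - e)) i i = (1 - e i i) * ((1 - e) i i) := by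
      rw [h1d, Matrix.diagonal_mul]
    have h3 : ((1 : Matrix (Fin n) (Fin n) F) - e) i i = 1 - e i i := by
      rw [Matrix.sub_apply, Matrix.one_apply_eq]
    rw [hv, Matrix.sub_apply, hu, Matrix.add_apply, h1, h2, h3, Matrix.one_apply_eq]
    have := hdiag_idem i
    linear_combination 2 * this
  have hvlt : ∀ i j : Fin n, ¬ i < j → v i j = 0 := by
    intro i j hij
    by_cases hr : r i j
    · have hij' : i = j := le_antisymm (hle i j hr) (not_lt.mp hij)
      rw [hij']; exact hvdiag j
    · exact hPv i j hr
  -- v is nilpotent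
  have hpow : ∀ m : ℕ, ∀ i j : Fin n, (j : ℕ) < (i : ℕ) + m → (v ^ m) i j = 0 := by
    intro m
    induction m with
    | zero =>
      intro i j h
      rw [pow_zero]
      exact Matrix.one_apply_ne (fun hh => by subst hh; omega)
    | succ m ih =>
      intro i j h
      rw [pow_succ, Matrix.mul_apply]
      apply Finset.sum_eq_zero
      intro k _
      by_cases hk : (k : ℕ) < (i : ℕ) + m
      · rw [ih i k hk, zero_mul]
      · have hkj : ¬ k < j := by
          rw [Fin.lt_def]; omega
        rw [hvlt k j hkj, mul_zero]
  have hvn : v ^ n = 0 := by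
    ext i j
    rw [Matrix.zero_apply]
    exact hpow n i j (by omega)
  have hnegvn : (-v) ^ n = 0 := by
    rw [neg_pow, hvn, mul_zero]
  -- the inverse of u via geometric series
  set M : Matrix (Fin n) (Fin n) F := ∑ k ∈ Finset.range n, (-v) ^ k with hM
  have hu1v : u = 1 - (-v) := by rw [hv]; abel
  have huM : u * M = 1 := by
    rw [hu1v, hM, mul_neg_geom_sum, hnegvn, sub_zero]
  have hMu : M * u = 1 := by
    rw [hu1v, hM, geom_sum_mul_neg, hnegvn, sub_zero]
  have hPpow : ∀ k : ℕ, P ((-v) ^ k) := by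
    intro k
    induction k with
    | zero => rw [pow_zero]; exact hPone
    | succ k ih =>
      rw [pow_succ]
      apply hPmul _ _ ih
      intro i j hij
      rw [Matrix.neg_apply, hPv i j hij, neg_zero]
  have hPM : P M := by
    intro i j hij
    rw [hM, Matrix.sum_apply]
    apply Finset.sum_eq_zero
    intro k _
    exact hPpow k i j hij
  refine ⟨M, u, hPM, hPu, hMu, huM, ?_⟩
  have : u * e * M = d := by
    rw [hkey, mul_assoc, huM, mul_one]
  rw [this, hd]
  exact Matrix.isDiag_diagonal _
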